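/- Let A > 0 and let x ∈ ℝ with |x| > 1/A. Define the real number k⁺(x) := sign(x)·√(x² − 1/A²) and the 2×2 complex matrix E⁺_A(x) := (1/√2)·s(1/(i·A·k⁺(x)) − 1)·[[xA/(1 − i·A·k⁺(x)), 1],[1, xA/(1 − i·A·k⁺(x))]]. Then: (i) E⁺_A(x) is the boundary value of E_A from the upper half-plane, i.e. E_A(x + iε) → E⁺_A(x) as ε → 0⁺; and (ii) conj(E⁺_A(x)) = i·E⁺_A(x)·σ₁, where conj denotes entrywise complex conjugation. -/

import Mathlib

open Complex Matrix MeasureTheory Filter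

noncomputable def csqrt (z : ℂ) : ℂ := z ^ (1/2 : ℂ)

noncomputable def sB (w : ℂ) : ℂ := Complex.I * csqrt (-w)

def SigmaSet (A : ℝ) : Set ℂ := Complex.ofReal '' (Set.Iic (-(1/A)) ∪ Set.Ici (1/A))

noncomputable def kA (A : ℝ) (l : ℂ) : ℂ := Complex.I * csqrt (1/(A:ℂ)^2 - l^2)

noncomputable def DA (A : ℝ) (l : ℂ) : Matrix (Fin 2) (Fin 2) ℂ :=
  (((Real.sqrt 2 : ℝ) : ℂ)⁻¹ * sB (1/(Complex.I * (A:ℂ) * kA A l) - 1)) •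
    !![l * (A:ℂ) / (1 - Complex.I * (A:ℂ) * kA A l), -1;
       -1, l * (A:ℂ) / (1 - Complex.I * (A:ℂ) * kA A l)]

noncomputable def EA (A : ℝ) (l : ℂ) : Matrix (Fin 2) (Fin 2) ℂ :=
  (((Real.sqrt 2 : ℝ) : ℂ)⁻¹ * sB (1/(Complex.I * (A:ℂ) * kA A l) - 1)) •
    !![l * (A:ℂ) / (1 - Complex.I * (A:ℂ) * kA A l), 1;
       1, l * (A:ℂ) / (1 - Complex.I * (A:ℂ) * kA A l)]

def sigma1 : Matrix (Fin 2) (Fin 2) ℂ := !![0, 1; 1, 0]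
def sigma2 : Matrix (Fin 2) (Fin 2) ℂ := !![0, -Complex.I; Complex.I, 0]
def sigma3 : Matrix (Fin 2) (Fin 2) ℂ := !![1, 0; 0, -1]

/- ## Auxiliary lemmas -/

section Aux
open Real

lemma csqrt_sq (z : ℂ) : csqrt z ^ 2 = z := by
  have := Complex.cpow_ofNat_inv_pow z 2
  simpa [csqrt, show ((2:ℕ):ℂ)⁻¹ = (1/2 : ℂ) by norm_num] using this

lemma arg_half_mem {z : ℂ} (hz : z.im ≠ 0) :
    (Complex.log z * (1/2 : ℂ)).im = z.arg / 2 ∧ -(π/2) < z.arg/2 ∧ z.arg/2 < π/2 := by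
  refine ⟨by simp [Complex.mul_im, Complex.log_im, Complex.log_re]; ring, ?_, ?_⟩
  · have := Complex.neg_pi_lt_arg z; linarith
  · have h2 : z.arg < π := by
      rcases lt_or_eq_of_le (Complex.arg_le_pi z) with h | h
      · exact h
      · exact absurd (Complex.arg_eq_pi_iff.1 h).2 hz
    linarith

lemma csqrt_re_pos {z : ℂ} (hz : z.im ≠ 0) : 0 < (csqrt z).re := by
  have hz0 : z ≠ 0 := fun h => hz (by simp [h])
  obtain ⟨h0, h1, h2⟩ := arg_half_mem hz
  rw [csqrt, Complex.cpow_def_of_ne_zero hz0, Complex.exp_re, h0]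
  have := Real.cos_pos_of_mem_Ioo (show z.arg/2 ∈ Set.Ioo (-(π/2)) (π/2) from ⟨h1, h2⟩)
  positivity

lemma csqrt_im_pos {z : ℂ} (hz : 0 < z.im) : 0 < (csqrt z).im := by
  have hz0 : z ≠ 0 := fun h => by simp [h] at hz
  obtain ⟨h0, h1, h2⟩ := arg_half_mem (ne_of_gt hz)
  rw [csqrt, Complex.cpow_def_of_ne_zero hz0, Complex.exp_im, h0]
  have harg : 0 < z.arg := by
    rcases lt_trichotomy z.arg 0 with h | h | h
    · exact absurd (Complex.arg_neg_iff.1 h) (by linarith)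
    · exact absurd ((Complex.arg_eq_zero_iff.1 h).2) (ne_of_gt hz)
    · exact h
  have := Real.sin_pos_of_pos_of_lt_pi (by linarith : 0 < z.arg/2) (by linarith)
  positivity

lemma csqrt_im_neg {z : ℂ} (hz : z.im < 0) : (csqrt z).im < 0 := by
  have hz0 : z ≠ 0 := fun h => by simp [h] at hz
  obtain ⟨h0, h1, h2⟩ := arg_half_mem (ne_of_lt hz)
  rw [csqrt, Complex.cpow_def_of_ne_zero hz0, Complex.exp_im, h0]
  have harg : z.arg < 0 := Complex.arg_neg_iff.2 hz
  have hs : Real.sin (z.arg/2) < 0 := by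
    have := Real.sin_pos_of_pos_of_lt_pi (show 0 < -(z.arg/2) by linarith) (by linarith)
    rw [Real.sin_neg] at this; linarith
  have he : 0 < Real.exp (Complex.log z * (1/2:ℂ)).re := Real.exp_pos _
  nlinarith

lemma sq_uniq_pos {a b : ℂ} (h : a^2 = b^2) (ha : 0 < a.im) (hb : 0 < b.im) : a = b := by
  have h2 : (a - b) * (a + b) = 0 := by linear_combination h
  rcases mul_eq_zero.1 h2 with h' | h'
  · exact sub_eq_zero.1 h'
  · exfalso
    have hab : a = -b := by linear_combination h'
    have := congrArg Complex.im hab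
    simp only [Complex.neg_im] at this; linarith

lemma sq_uniq_neg {a b : ℂ} (h : a^2 = b^2) (ha : a.im < 0) (hb : b.im < 0) : a = b := by
  have := sq_uniq_pos (a := -a) (b := -b) (by ring_nf; linear_combination h)
    (by simp; linarith) (by simp; linarith)
  linear_combination -this

lemma csqrt_of_im_neg {z : ℂ} (hz : z.im < 0) : csqrt z = -Complex.I * csqrt (-z) := by
  apply sq_uniq_neg
  · rw [csqrt_sq]; ring_nf; rw [Complex.I_sq, csqrt_sq]; ring
  · exact csqrt_im_neg hz
  · have h1 : (-Complex.I * csqrt (-z)).im = -(csqrt (-z)).re := by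
      simp [Complex.mul_im]
    rw [h1]
    have := csqrt_re_pos (z := -z) (by simp; exact ne_of_lt hz)
    linarith

lemma csqrt_of_im_pos {z : ℂ} (hz : 0 < z.im) : csqrt z = Complex.I * csqrt (-z) := by
  apply sq_uniq_pos
  · rw [csqrt_sq]; ring_nf; rw [Complex.I_sq, csqrt_sq]; ring
  · exact csqrt_im_pos hz
  · have h1 : (Complex.I * csqrt (-z)).im = (csqrt (-z)).re := by
      simp [Complex.mul_im]
    rw [h1]
    exact csqrt_re_pos (z := -z) (by simp; exact ne_of_gt hz)

lemma csqrt_conj {z : ℂ} (hz : z.im ≠ 0) :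
    (starRingEnd ℂ) (csqrt z) = csqrt ((starRingEnd ℂ) z) := by
  rcases hz.lt_or_gt with h | h
  · apply sq_uniq_pos
    · rw [csqrt_sq, ← map_pow, csqrt_sq]
    · simpa using csqrt_im_neg h
    · exact csqrt_im_pos (by simpa using h)
  · apply sq_uniq_neg
    · rw [csqrt_sq, ← map_pow, csqrt_sq]
    · simpa using csqrt_im_pos h
    · exact csqrt_im_neg (by simpa using h)

lemma key_identity (t u : ℝ) (ht : t ≠ 0) (hu : u^2 = 1 + t^2) (hut : 0 < u*t) :
    Complex.I * (u:ℂ) * csqrt (1 - Complex.I/(t:ℂ)) =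
      (1 + Complex.I*(t:ℂ)) * csqrt (1 + Complex.I/(t:ℂ)) := by
  have htC : (t:ℂ) ≠ 0 := by exact_mod_cast ht
  have him1 : (1 - Complex.I/(t:ℂ)).im = -t⁻¹ := by
    simp [Complex.div_im]
  have him2 : (1 + Complex.I/(t:ℂ)).im = t⁻¹ := by
    simp [Complex.div_im]
  set z1 := csqrt (1 - Complex.I/(t:ℂ)) with hz1
  set z2 := csqrt (1 + Complex.I/(t:ℂ)) with hz2
  have hz1re : 0 < z1.re := csqrt_re_pos (by rw [him1]; simpa using ht)
  have hz2re : 0 < z2.re := csqrt_re_pos (by rw [him2]; simpa using ht)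
  have hLim : (Complex.I * (u:ℂ) * z1).im = u * z1.re := by
    simp [Complex.mul_im, Complex.mul_re]
  have hRim : ((1 + Complex.I*(t:ℂ)) * z2).im = z2.im + t * z2.re := by
    simp [Complex.mul_im, Complex.mul_re, Complex.add_im, Complex.add_re]
  have hsq : (Complex.I * (u:ℂ) * z1)^2 = ((1 + Complex.I*(t:ℂ)) * z2)^2 := by
    rw [mul_pow, mul_pow, mul_pow, Complex.I_sq, hz1, hz2, csqrt_sq, csqrt_sq]
    have hcast : (u:ℂ)^2 = 1 + (t:ℂ)^2 := by exact_mod_cast hu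
    field_simp
    ring_nf
    linear_combination (Complex.I - (t:ℂ)) * hcast + (-2*(t:ℂ) - (t:ℂ)^3 - (t:ℂ)^2*Complex.I) * Complex.I_sq
  rcases lt_trichotomy t 0 with h | h | h
  · have hu0 : u < 0 := by nlinarith
    apply sq_uniq_neg hsq
    · rw [hLim]; nlinarith
    · rw [hRim]
      have h2 : z2.im < 0 := csqrt_im_neg (by rw [him2]; simpa using inv_lt_zero.2 h)
      nlinarith
  · exact absurd h ht
  · have hu0 : 0 < u := by nlinarith
    apply sq_uniq_pos hsq
    · rw [hLim]; nlinarith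
    · rw [hRim]
      have h2 : 0 < z2.im := csqrt_im_pos (by rw [him2]; positivity)
      nlinarith

lemma neg_w_eq (t : ℝ) (ht : t ≠ 0) :
    -(1/(Complex.I*(t:ℂ)) - 1) = 1 + Complex.I/(t:ℂ) := by
  have htC : (t:ℂ) ≠ 0 := by exact_mod_cast ht
  field_simp
  linear_combination (-1:ℂ) * Complex.I_sq

lemma P2a (t u : ℝ) (ht : t ≠ 0) (hu : u^2 = 1 + t^2) (hut : 0 < u*t) :
    (starRingEnd ℂ) (((Real.sqrt 2 : ℝ) : ℂ)⁻¹ * sB (1/(Complex.I*(t:ℂ)) - 1)) *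
      (starRingEnd ℂ) ((u:ℂ)/(1 - Complex.I*(t:ℂ))) =
    Complex.I * (((Real.sqrt 2 : ℝ) : ℂ)⁻¹ * sB (1/(Complex.I*(t:ℂ)) - 1)) := by
  have htC : (t:ℂ) ≠ 0 := by exact_mod_cast ht
  have hden : (1 - Complex.I*(t:ℂ)) ≠ 0 := by
    intro h
    have := congrArg Complex.im h
    simp at this
    exact ht this
  have hden' : (1 + Complex.I*(t:ℂ)) ≠ 0 := by
    intro h
    have := congrArg Complex.im h
    simp at this
    exact ht this
  have hs2 : ((Real.sqrt 2 : ℝ) : ℂ) ≠ 0 := by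
    simp [Real.sqrt_eq_zero']
  have him : (1 + Complex.I/(t:ℂ)).im ≠ 0 := by
    simp [Complex.div_im]
    exact ht
  rw [sB, neg_w_eq t ht]
  have hconj1 : (starRingEnd ℂ) (Complex.I * csqrt (1 + Complex.I/(t:ℂ)))
      = -Complex.I * csqrt (1 - Complex.I/(t:ℂ)) := by
    rw [_root_.map_mul, csqrt_conj him]
    congr 1
    · simp
    · congr 1
      simp [map_add, map_div₀]
      ring
  have hconj2 : (starRingEnd ℂ) ((u:ℂ)/(1 - Complex.I*(t:ℂ)))
      = (u:ℂ)/(1 + Complex.I*(t:ℂ)) := by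
    rw [map_div₀]
    congr 1
    · simp
    · simp
  rw [_root_.map_mul, hconj1, hconj2]
  have key := key_identity t u ht hu hut
  set s1 := csqrt (1 - Complex.I/(t:ℂ)) with hs1def
  set s2 := csqrt (1 + Complex.I/(t:ℂ)) with hs2def
  field_simp
  have hc2 : ((Real.sqrt 2:ℝ):ℂ) * (starRingEnd ℂ) (1/((Real.sqrt 2:ℝ):ℂ)) = 1 := by
    rw [map_div₀, map_one, Complex.conj_ofReal]; field_simp
  linear_combination Complex.I * key + (-(u:ℂ)*s1) * Complex.I_sq - s1*(u:ℂ) * hc2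

lemma key_identity' (t u : ℝ) (ht : t ≠ 0) (hu : u^2 = 1 + t^2) (hut : 0 < u*t) :
    Complex.I * (1 - Complex.I*(t:ℂ)) * csqrt (1 - Complex.I/(t:ℂ)) =
      (u:ℂ) * csqrt (1 + Complex.I/(t:ℂ)) := by
  have key2 := key_identity (-t) (-u) (by simpa using ht) (by rw [neg_pow]; simpa using hu)
    (by nlinarith)
  push_cast at key2
  rw [show (1:ℂ) - Complex.I / -(t:ℂ) = 1 + Complex.I/(t:ℂ) from by ring,
      show (1:ℂ) + Complex.I / -(t:ℂ) = 1 - Complex.I/(t:ℂ) from by ring] at key2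
  linear_combination (-Complex.I) * key2 +
    (-(u:ℂ) * csqrt (1 + Complex.I/(t:ℂ))) * Complex.I_sq

lemma P2b (t u : ℝ) (ht : t ≠ 0) (hu : u^2 = 1 + t^2) (hut : 0 < u*t) :
    (starRingEnd ℂ) (((Real.sqrt 2 : ℝ) : ℂ)⁻¹ * sB (1/(Complex.I*(t:ℂ)) - 1)) =
    Complex.I * ((((Real.sqrt 2 : ℝ) : ℂ)⁻¹ * sB (1/(Complex.I*(t:ℂ)) - 1)) *
      ((u:ℂ)/(1 - Complex.I*(t:ℂ)))) := by
  have htC : (t:ℂ) ≠ 0 := by exact_mod_cast ht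
  have hden : (1 - Complex.I*(t:ℂ)) ≠ 0 := by
    intro h
    have := congrArg Complex.im h
    simp at this
    exact ht this
  have hs2 : ((Real.sqrt 2 : ℝ) : ℂ) ≠ 0 := by
    simp [Real.sqrt_eq_zero']
  have him : (1 + Complex.I/(t:ℂ)).im ≠ 0 := by
    simp [Complex.div_im]
    exact ht
  rw [sB, neg_w_eq t ht]
  have hconj1 : (starRingEnd ℂ) (Complex.I * csqrt (1 + Complex.I/(t:ℂ)))
      = -Complex.I * csqrt (1 - Complex.I/(t:ℂ)) := by
    rw [_root_.map_mul, csqrt_conj him]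
    congr 1
    · simp
    · congr 1
      simp [map_add, map_div₀]
      ring
  rw [_root_.map_mul, hconj1, map_inv₀, Complex.conj_ofReal]
  have key := key_identity' t u ht hu hut
  set s1 := csqrt (1 - Complex.I/(t:ℂ)) with hs1def
  set s2 := csqrt (1 + Complex.I/(t:ℂ)) with hs2def
  field_simp
  linear_combination Complex.I * key + (-s1 + Complex.I*(t:ℂ)*s1) * Complex.I_sq

end Aux

/-- boundary values of E_A on the upper side of the branch cut, and
the symmetry conj(E⁺_A(x)) = i·E⁺_A(x)·σ₁. -/
theorem stmt_9 (A : ℝ) (hA : 0 < A) (x : ℝ) (hx : 1/A < |x|)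
    (kplus : ℝ) (hk : kplus = Real.sign x * Real.sqrt (x^2 - 1/A^2))
    (Eplus : Matrix (Fin 2) (Fin 2) ℂ)
    (hE : Eplus = (((Real.sqrt 2 : ℝ) : ℂ)⁻¹ *
        sB (1/(Complex.I * (A:ℂ) * (kplus:ℂ)) - 1)) •
      !![(x:ℂ) * (A:ℂ) / (1 - Complex.I * (A:ℂ) * (kplus:ℂ)), 1;
         1, (x:ℂ) * (A:ℂ) / (1 - Complex.I * (A:ℂ) * (kplus:ℂ))]) :
    Filter.Tendsto (fun ε : ℝ => EA A ((x:ℂ) + (ε:ℂ) * Complex.I))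
      (nhdsWithin 0 (Set.Ioi 0)) (nhds Eplus) ∧
    Eplus.map (starRingEnd ℂ) = Complex.I • (Eplus * sigma1) := by
  -- basic facts
  have hA1 : 0 < 1/A := by positivity
  have hxabs : 0 < |x| := lt_trans hA1 hx
  have hx0 : x ≠ 0 := abs_pos.1 hxabs
  have hc : 0 < x^2 - 1/A^2 := by
    have h1 : (1/A)^2 < |x|^2 := by
      apply pow_lt_pow_left₀ hx hA1.le
      norm_num
    rw [_root_.sq_abs] at h1
    have h2 : (1/A)^2 = 1/A^2 := by
      rw [div_pow]; norm_num
    linarith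
  have hsqc : 0 < Real.sqrt (x^2 - 1/A^2) := Real.sqrt_pos.2 hc
  have hkne : kplus ≠ 0 := by
    rw [hk]
    rcases hx0.lt_or_gt with h | h
    · rw [Real.sign_of_neg h]; nlinarith
    · rw [Real.sign_of_pos h]; nlinarith
  have hksq : kplus^2 = x^2 - 1/A^2 := by
    rw [hk, mul_pow, Real.sq_sqrt hc.le]
    rcases hx0.lt_or_gt with h | h
    · rw [Real.sign_of_neg h]; ring
    · rw [Real.sign_of_pos h]; ring
  -- t,u setup for Part 2
  set t : ℝ := A * kplus with htdef
  set u : ℝ := x * A with hudef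
  have ht : t ≠ 0 := mul_ne_zero hA.ne' hkne
  have hu : u^2 = 1 + t^2 := by
    rw [hudef, htdef, mul_pow, mul_pow, hksq]
    field_simp
    ring
  have hut : 0 < u * t := by
    rw [hudef, htdef, hk]
    rcases hx0.lt_or_gt with h | h
    · rw [Real.sign_of_neg h]
      nlinarith [mul_pos (mul_pos (mul_pos (neg_pos.2 h) hA) hA) hsqc]
    · rw [Real.sign_of_pos h]
      nlinarith [mul_pos (mul_pos (mul_pos h hA) hA) hsqc]
  -- casts
  have e1 : Complex.I * (A:ℂ) * (kplus:ℂ) = Complex.I * ((t:ℝ):ℂ) := by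
    rw [htdef]; push_cast; ring
  have e2 : (x:ℂ) * (A:ℂ) = ((u:ℝ):ℂ) := by
    rw [hudef]; push_cast; ring
  have hIAk : Complex.I * (A:ℂ) * (kplus:ℂ) ≠ 0 := by
    simp [Complex.I_ne_zero, Complex.ofReal_ne_zero, hA.ne', hkne]
  have hden : (1:ℂ) - Complex.I * (A:ℂ) * (kplus:ℂ) ≠ 0 := by
    intro h
    have h2 := congrArg Complex.im h
    simp [Complex.mul_im] at h2
    rcases h2 with h2 | h2
    · exact hA.ne' h2
    · exact hkne h2
  constructor
  · ------------------------------------------------------------------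
    -- Part 1: boundary limit
    -- limit of kA along the upper boundary
    have hk0 : Tendsto (fun ε : ℝ => kA A ((x:ℂ) + (ε:ℂ)*Complex.I))
        (nhdsWithin 0 (Set.Ioi 0)) (nhds (kplus:ℂ)) := by
      have hqcont : Continuous fun ε : ℝ => ((x:ℂ)+(ε:ℂ)*Complex.I)^2 - 1/(A:ℂ)^2 := by
        fun_prop
      have hq : Tendsto (fun ε : ℝ => ((x:ℂ)+(ε:ℂ)*Complex.I)^2 - 1/(A:ℂ)^2)
          (nhdsWithin 0 (Set.Ioi 0)) (nhds (((x^2 - 1/A^2 : ℝ)):ℂ)) := by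
        have h0 := (hqcont.tendsto 0).mono_left
          (nhdsWithin_le_nhds (s := Set.Ioi (0:ℝ)))
        have hval0 : ((x:ℂ)+((0:ℝ):ℂ)*Complex.I)^2 - 1/(A:ℂ)^2 = ((x^2 - 1/A^2 : ℝ):ℂ) := by
          push_cast; ring
        rwa [hval0] at h0
      have hmemc : (((x^2 - 1/A^2 : ℝ)):ℂ) ∈ Complex.slitPlane :=
        Complex.mem_slitPlane_iff.2 (Or.inl (by rw [Complex.ofReal_re]; exact hc))
      have hcs : Tendsto (fun ε : ℝ => csqrt (((x:ℂ)+(ε:ℂ)*Complex.I)^2 - 1/(A:ℂ)^2))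
          (nhdsWithin 0 (Set.Ioi 0)) (nhds (csqrt ((x^2-1/A^2:ℝ):ℂ))) := by
        have h2 : ContinuousAt (fun z : ℂ => z ^ ((1:ℂ)/2)) ((x^2-1/A^2:ℝ):ℂ) :=
          continuousAt_cpow_const hmemc
        exact h2.tendsto.comp hq
      have hval : csqrt ((x^2-1/A^2:ℝ):ℂ) = ((Real.sqrt (x^2-1/A^2):ℝ):ℂ) := by
        rw [show (csqrt ((x^2-1/A^2:ℝ):ℂ)) = ((x^2-1/A^2:ℝ):ℂ) ^ ((1:ℂ)/2) from rfl]
        rw [show ((1:ℂ)/2) = (((1/2:ℝ)):ℂ) by norm_num, ← Complex.ofReal_cpow hc.le]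
        rw [Real.sqrt_eq_rpow]
      have hIm : ∀ ε : ℝ, ((1:ℂ)/(A:ℂ)^2 - ((x:ℂ)+(ε:ℂ)*Complex.I)^2).im = -(2*x*ε) := by
        intro ε
        simp [Complex.sub_im, Complex.div_im, Complex.add_im, Complex.add_re, Complex.mul_im,
          Complex.mul_re, pow_two]
        ring
      rcases hx0.lt_or_gt with hxneg | hxpos
      · -- x < 0
        have hsign : (kplus:ℂ) = -((Real.sqrt (x^2-1/A^2):ℝ):ℂ) := by
          rw [hk, Real.sign_of_neg hxneg]; push_cast; ring
        rw [hsign, ← hval]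
        apply Tendsto.congr' ?_ hcs.neg
        filter_upwards [self_mem_nhdsWithin] with ε hε
        have him' : 0 < ((1:ℂ)/(A:ℂ)^2 - ((x:ℂ)+(ε:ℂ)*Complex.I)^2).im := by
          rw [hIm]
          have : (0:ℝ) < ε := hε
          nlinarith
        rw [kA, csqrt_of_im_pos him',
          show -((1:ℂ)/(A:ℂ)^2 - ((x:ℂ)+(ε:ℂ)*Complex.I)^2)
            = ((x:ℂ)+(ε:ℂ)*Complex.I)^2 - 1/(A:ℂ)^2 from by ring]
        linear_combination (-(csqrt (((x:ℂ)+(ε:ℂ)*Complex.I)^2 - 1/(A:ℂ)^2))) * Complex.I_sq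
      · -- x > 0
        have hsign : (kplus:ℂ) = ((Real.sqrt (x^2-1/A^2):ℝ):ℂ) := by
          rw [hk, Real.sign_of_pos hxpos]; push_cast; ring
        rw [hsign, ← hval]
        apply Tendsto.congr' ?_ hcs
        filter_upwards [self_mem_nhdsWithin] with ε hε
        have him' : ((1:ℂ)/(A:ℂ)^2 - ((x:ℂ)+(ε:ℂ)*Complex.I)^2).im < 0 := by
          rw [hIm]
          have : (0:ℝ) < ε := hε
          nlinarith
        rw [kA, csqrt_of_im_neg him',
          show -((1:ℂ)/(A:ℂ)^2 - ((x:ℂ)+(ε:ℂ)*Complex.I)^2)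
            = ((x:ℂ)+(ε:ℂ)*Complex.I)^2 - 1/(A:ℂ)^2 from by ring]
        linear_combination (csqrt (((x:ℂ)+(ε:ℂ)*Complex.I)^2 - 1/(A:ℂ)^2)) * Complex.I_sq
    -- assemble the limit of EA
    have hlam : Tendsto (fun ε : ℝ => (x:ℂ) + (ε:ℂ)*Complex.I)
        (nhdsWithin 0 (Set.Ioi 0)) (nhds (x:ℂ)) := by
      have hcont : Continuous fun ε : ℝ => (x:ℂ) + (ε:ℂ)*Complex.I := by fun_prop
      have h0 := (hcont.tendsto 0).mono_left
        (nhdsWithin_le_nhds (s := Set.Ioi (0:ℝ)))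
      simpa using h0
    have hIAkA : Tendsto (fun ε : ℝ => Complex.I * (A:ℂ) * kA A ((x:ℂ)+(ε:ℂ)*Complex.I))
        (nhdsWithin 0 (Set.Ioi 0)) (nhds (Complex.I*(A:ℂ)*(kplus:ℂ))) := by
      have := hk0.const_mul (Complex.I * (A:ℂ))
      simpa [mul_assoc] using this
    have ha : Tendsto (fun ε : ℝ =>
        ((x:ℂ)+(ε:ℂ)*Complex.I)*(A:ℂ)/(1 - Complex.I*(A:ℂ)*kA A ((x:ℂ)+(ε:ℂ)*Complex.I)))
        (nhdsWithin 0 (Set.Ioi 0))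
        (nhds ((x:ℂ)*(A:ℂ)/(1 - Complex.I*(A:ℂ)*(kplus:ℂ)))) :=
      (hlam.mul_const _).div (tendsto_const_nhds.sub hIAkA) hden
    have hw : Tendsto (fun ε : ℝ =>
        1/(Complex.I*(A:ℂ)*kA A ((x:ℂ)+(ε:ℂ)*Complex.I)) - 1)
        (nhdsWithin 0 (Set.Ioi 0))
        (nhds (1/(Complex.I*(A:ℂ)*(kplus:ℂ)) - 1)) :=
      (tendsto_const_nhds.div hIAkA hIAk).sub tendsto_const_nhds
    have hsBcont : ContinuousAt sB (1/(Complex.I*(A:ℂ)*(kplus:ℂ)) - 1) := by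
      have hmem : -(1/(Complex.I*(A:ℂ)*(kplus:ℂ)) - 1) ∈ Complex.slitPlane := by
        have e1' : 1/(Complex.I*(A:ℂ)*(kplus:ℂ)) - 1 = 1/(Complex.I*((t:ℝ):ℂ)) - 1 := by
          rw [e1]
        rw [e1', neg_w_eq t ht]
        apply Complex.mem_slitPlane_iff.2
        right
        simp [Complex.div_im]
        exact ht
      have h2 : ContinuousAt (fun z : ℂ => z ^ ((1:ℂ)/2))
          (-(1/(Complex.I*(A:ℂ)*(kplus:ℂ)) - 1)) := continuousAt_cpow_const hmem
      have h3 : ContinuousAt (fun w : ℂ => Complex.I * csqrt (-w))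
          (1/(Complex.I*(A:ℂ)*(kplus:ℂ)) - 1) :=
        continuousAt_const.mul (h2.comp continuous_neg.continuousAt)
      exact h3
    have hcoef : Tendsto (fun ε : ℝ => ((Real.sqrt 2:ℝ):ℂ)⁻¹ *
        sB (1/(Complex.I*(A:ℂ)*kA A ((x:ℂ)+(ε:ℂ)*Complex.I)) - 1))
        (nhdsWithin 0 (Set.Ioi 0))
        (nhds (((Real.sqrt 2:ℝ):ℂ)⁻¹ * sB (1/(Complex.I*(A:ℂ)*(kplus:ℂ)) - 1))) :=
      (hsBcont.tendsto.comp hw).const_mul _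
    have hMat : Tendsto (fun ε : ℝ =>
        !![((x:ℂ)+(ε:ℂ)*Complex.I)*(A:ℂ)/(1 - Complex.I*(A:ℂ)*kA A ((x:ℂ)+(ε:ℂ)*Complex.I)), 1;
           1, ((x:ℂ)+(ε:ℂ)*Complex.I)*(A:ℂ)/(1 - Complex.I*(A:ℂ)*kA A ((x:ℂ)+(ε:ℂ)*Complex.I))])
        (nhdsWithin 0 (Set.Ioi 0))
        (nhds (!![(x:ℂ)*(A:ℂ)/(1 - Complex.I*(A:ℂ)*(kplus:ℂ)), 1;
                  1, (x:ℂ)*(A:ℂ)/(1 - Complex.I*(A:ℂ)*(kplus:ℂ))])) := by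
      apply tendsto_pi_nhds.2
      intro i
      apply tendsto_pi_nhds.2
      intro j
      fin_cases i <;> fin_cases j <;> simp only [Matrix.cons_val', Matrix.cons_val_zero,
        Matrix.cons_val_one, Matrix.head_cons, Matrix.head_fin_const, Matrix.empty_val',
        Matrix.cons_val_fin_one, Matrix.of_apply] <;>
        first
          | exact ha
          | exact tendsto_const_nhds
    rw [hE]
    simp only [EA]
    exact hcoef.smul hMat
  · ------------------------------------------------------------------
    -- Part 2: conjugation symmetry
    subst hE
    have p2a := P2a t u ht hu hut
    have p2b := P2b t u ht hu hut
    rw [← e1] at p2a p2b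
    rw [← e2] at p2a p2b
    simp only [_root_.map_mul, _root_.map_div₀, _root_.map_sub, _root_.map_one, _root_.map_inv₀, Complex.conj_I,
      Complex.conj_ofReal] at p2a p2b
    ext i j
    fin_cases i <;> fin_cases j <;>
      simp only [Fin.isValue, Fin.mk_zero, Fin.mk_one, Matrix.map_apply, Matrix.smul_apply,
        smul_eq_mul, Matrix.mul_apply, Fin.sum_univ_two, sigma1, Matrix.cons_val',
        Matrix.cons_val_zero, Matrix.cons_val_one, Matrix.head_cons, Matrix.head_fin_const,
        Matrix.empty_val', Matrix.cons_val_fin_one, Matrix.of_apply, mul_one, mul_zero,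
        zero_add, add_zero, _root_.map_mul, _root_.map_div₀, _root_.map_sub, _root_.map_one,
        _root_.map_inv₀, Complex.conj_I, Complex.conj_ofReal] <;>
      first
        | linear_combination p2a
        | linear_combination p2b
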